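/- Let α ∈ [1/2, 1) and B > 1. There is a constant C such that for all j, the four-fold sum Σ_{n₁,n₂,n₃,n₄ ∈ ℤ, |n_i| ∈ [B^{j-1},B^{j+1}]} (|n₁−n₂+n₃−n₄|+1)^{−α} (|n₃−n₄|+1)^{−α} (|n₁−n₂|+1)^{−α} ≤ C B^{2j(2−α)}. -/

import Mathlib

open Finset

lemma aux_sum_rpow (α : ℝ) (hα0 : 0 ≤ α) (hα2 : α < 1) (N : ℕ) :
    ∑ k ∈ Finset.range (N + 1), ((k : ℝ) + 1) ^ (-α) ≤ ((N : ℝ) + 1) ^ (1 - α) / (1 - α) := by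
  have h1α : 0 < 1 - α := by linarith
  induction N with
  | zero =>
      simp only [Nat.cast_zero, zero_add, Finset.sum_range_one, Real.one_rpow]
      rw [le_div_iff₀ h1α]
      nlinarith [Real.rpow_le_one_of_one_le_of_nonpos (le_refl (1:ℝ)) (neg_nonpos.mpr hα0)]
  | succ N ih =>
      rw [Finset.sum_range_succ]
      have key : ((N : ℝ) + 1) ^ (1 - α) + (1 - α) * (((N : ℝ) + 1) + 1) ^ (-α)
          ≤ (((N : ℝ) + 1) + 1) ^ (1 - α) := by
        set x : ℝ := (N : ℝ) + 2 with hx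
        have hN : (0:ℝ) ≤ (N:ℝ) := Nat.cast_nonneg N
        have hx1 : (1 : ℝ) ≤ x := by rw [hx]; linarith
        have hx0 : (0 : ℝ) < x := by linarith
        have hb := rpow_one_add_le_one_add_mul_self (s := -1/x)
          (by rw [neg_div, neg_le_neg_iff]; exact (div_le_one hx0).mpr hx1)
          (le_of_lt h1α) (by linarith)
        have h2 : ((x - 1)/x) ^ (1 - α) ≤ 1 - (1 - α) / x := by
          have he : (1 : ℝ) + -1/x = (x - 1)/x := by field_simp; ring
          rw [he] at hb
          calc ((x-1)/x) ^ (1-α) ≤ 1 + (1-α) * (-1/x) := hb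
            _ = 1 - (1-α)/x := by ring
        have hxm : (0:ℝ) ≤ x - 1 := by linarith
        rw [Real.div_rpow hxm hx0.le, div_le_iff₀ (Real.rpow_pos_of_pos hx0 _)] at h2
        have hxpow : x ^ (1 - α) / x = x ^ (-α) := by
          rw [← Real.rpow_sub_one hx0.ne']
          norm_num
        have hfin : (x - 1) ^ (1 - α) ≤ x ^ (1-α) - (1-α) * x^(-α) := by
          calc (x - 1) ^ (1 - α) ≤ (1 - (1-α)/x) * x ^ (1-α) := h2
            _ = x ^ (1-α) - (1-α) * (x ^ (1-α) / x) := by ring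
            _ = x ^ (1-α) - (1-α) * x ^ (-α) := by rw [hxpow]
        have hxe : x - 1 = (N : ℝ) + 1 := by rw [hx]; ring
        have hxe2 : ((N:ℝ) + 1) + 1 = x := by rw [hx]; ring
        rw [hxe2, ← hxe]
        linarith
      have hstep : ((N:ℝ) + 1 + 1) ^ (-α)
          ≤ (((N:ℝ)+1)+1)^(1-α)/(1-α) - ((N:ℝ)+1)^(1-α)/(1-α) := by
        rw [div_sub_div_same, le_div_iff₀ h1α]
        nlinarith
      push_cast
      linarith

lemma aux_sym (α : ℝ) (hα0 : 0 ≤ α) (hα2 : α < 1) (M : ℕ) :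
    ∑ k ∈ Finset.Icc (-(M:ℤ)) M, (|(k : ℝ)| + 1) ^ (-α)
      ≤ 2 * ((M : ℝ) + 1) ^ (1 - α) / (1 - α) := by
  have hnn : ∀ k : ℤ, 0 ≤ (|(k : ℝ)| + 1) ^ (-α) := fun k => Real.rpow_nonneg (by positivity) _
  have hsplit : Finset.Icc (-(M:ℤ)) M = Finset.Icc (-(M:ℤ)) (-1) ∪ Finset.Icc 0 M := by
    ext k; simp only [Finset.mem_Icc, Finset.mem_union]; omega
  have hdisj : Disjoint (Finset.Icc (-(M:ℤ)) (-1)) (Finset.Icc (0:ℤ) M) := by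
    rw [Finset.disjoint_left]; intro a ha hb
    simp only [Finset.mem_Icc] at ha hb; omega
  rw [hsplit, Finset.sum_union hdisj]
  have hpos : ∑ k ∈ Finset.Icc (0:ℤ) M, (|(k : ℝ)| + 1) ^ (-α)
      ≤ ((M : ℝ) + 1) ^ (1 - α) / (1 - α) := by
    have he : ∑ k ∈ Finset.Icc (0:ℤ) M, (|(k : ℝ)| + 1) ^ (-α)
        = ∑ k ∈ Finset.range (M + 1), ((k : ℝ) + 1) ^ (-α) := by
      refine Finset.sum_nbij' (fun k => k.toNat) (fun n => (n : ℤ)) ?_ ?_ ?_ ?_ ?_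
      · intro a ha; simp only [Finset.mem_Icc] at ha; simp only [Finset.mem_range]; omega
      · intro a ha; simp only [Finset.mem_range] at ha; simp only [Finset.mem_Icc]; omega
      · intro a ha; simp only [Finset.mem_Icc] at ha; simpa using Int.toNat_of_nonneg ha.1
      · intro a _; simp
      · intro a ha; simp only [Finset.mem_Icc] at ha
        congr 2
        rw [abs_of_nonneg (show (0:ℝ) ≤ (a:ℝ) by exact_mod_cast ha.1)]
        exact_mod_cast (congrArg (Int.cast : ℤ → ℝ) (Int.toNat_of_nonneg ha.1)).symm
    rw [he]; exact aux_sum_rpow α hα0 hα2 M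
  have hneg : ∑ k ∈ Finset.Icc (-(M:ℤ)) (-1), (|(k : ℝ)| + 1) ^ (-α)
      ≤ ((M : ℝ) + 1) ^ (1 - α) / (1 - α) := by
    have he : ∑ k ∈ Finset.Icc (-(M:ℤ)) (-1), (|(k : ℝ)| + 1) ^ (-α)
        = ∑ k ∈ Finset.Icc (1:ℤ) M, (|(k : ℝ)| + 1) ^ (-α) := by
      refine Finset.sum_nbij' (fun k => -k) (fun k => -k) ?_ ?_ ?_ ?_ ?_
      · intro a ha; simp only [Finset.mem_Icc] at ha ⊢; omega
      · intro a ha; simp only [Finset.mem_Icc] at ha ⊢; omega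
      · intro a _; ring
      · intro a _; ring
      · intro a _; push_cast; rw [abs_neg]
    rw [he]
    calc ∑ k ∈ Finset.Icc (1:ℤ) M, (|(k : ℝ)| + 1) ^ (-α)
        ≤ ∑ k ∈ Finset.Icc (0:ℤ) M, (|(k : ℝ)| + 1) ^ (-α) := by
          apply Finset.sum_le_sum_of_subset_of_nonneg
          · intro a; simp only [Finset.mem_Icc]; omega
          · intro a _ _; exact hnn a
      _ ≤ ((M : ℝ) + 1) ^ (1 - α) / (1 - α) := hpos
  have : 2 * ((M : ℝ) + 1) ^ (1 - α) / (1 - α)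
      = ((M:ℝ)+1)^(1-α)/(1-α) + ((M:ℝ)+1)^(1-α)/(1-α) := by ring
  linarith

/-- for `α ∈ [1/2,1)` and `B > 1`, the four-fold sum over the annulus
`|nᵢ| ∈ [B^{j-1}, B^{j+1}]` of
`(|n₁−n₂+n₃−n₄|+1)^{−α}(|n₃−n₄|+1)^{−α}(|n₁−n₂|+1)^{−α}` is `O(B^{2j(2−α)})`. -/
theorem stmt_16 (α B : ℝ) (hα₁ : 1 / 2 ≤ α) (hα₂ : α < 1) (hB : 1 < B) :
    ∃ C : ℝ, 0 < C ∧ ∀ j : ℕ, 1 ≤ j →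
      (∑' n₁ : ℤ, ∑' n₂ : ℤ, ∑' n₃ : ℤ, ∑' n₄ : ℤ,
        (if (B ^ ((j : ℝ) - 1) ≤ |(n₁ : ℝ)| ∧ |(n₁ : ℝ)| ≤ B ^ ((j : ℝ) + 1) ∧
             B ^ ((j : ℝ) - 1) ≤ |(n₂ : ℝ)| ∧ |(n₂ : ℝ)| ≤ B ^ ((j : ℝ) + 1) ∧
             B ^ ((j : ℝ) - 1) ≤ |(n₃ : ℝ)| ∧ |(n₃ : ℝ)| ≤ B ^ ((j : ℝ) + 1) ∧
             B ^ ((j : ℝ) - 1) ≤ |(n₄ : ℝ)| ∧ |(n₄ : ℝ)| ≤ B ^ ((j : ℝ) + 1))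
         then (|(n₁ : ℝ) - (n₂ : ℝ) + (n₃ : ℝ) - (n₄ : ℝ)| + 1) ^ (-α) *
              (|(n₃ : ℝ) - (n₄ : ℝ)| + 1) ^ (-α) * (|(n₁ : ℝ) - (n₂ : ℝ)| + 1) ^ (-α)
         else 0))
      ≤ C * B ^ (2 * (j : ℝ) * (2 - α)) := by
  have hα0 : (0:ℝ) ≤ α := by linarith
  have h1α : (0:ℝ) < 1 - α := by linarith
  have hB0 : (0:ℝ) < B := by linarith
  refine ⟨(50 / (1 - α) * B ^ (2:ℝ)) ^ 2, by positivity, ?_⟩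
  intro j hj
  set F : ℤ → ℤ → ℤ → ℤ → ℝ := fun n₁ n₂ n₃ n₄ =>
      (if (B ^ ((j : ℝ) - 1) ≤ |(n₁ : ℝ)| ∧ |(n₁ : ℝ)| ≤ B ^ ((j : ℝ) + 1) ∧
             B ^ ((j : ℝ) - 1) ≤ |(n₂ : ℝ)| ∧ |(n₂ : ℝ)| ≤ B ^ ((j : ℝ) + 1) ∧
             B ^ ((j : ℝ) - 1) ≤ |(n₃ : ℝ)| ∧ |(n₃ : ℝ)| ≤ B ^ ((j : ℝ) + 1) ∧
             B ^ ((j : ℝ) - 1) ≤ |(n₄ : ℝ)| ∧ |(n₄ : ℝ)| ≤ B ^ ((j : ℝ) + 1))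
         then (|(n₁ : ℝ) - (n₂ : ℝ) + (n₃ : ℝ) - (n₄ : ℝ)| + 1) ^ (-α) *
              (|(n₃ : ℝ) - (n₄ : ℝ)| + 1) ^ (-α) * (|(n₁ : ℝ) - (n₂ : ℝ)| + 1) ^ (-α)
         else 0) with hF
  show (∑' n₁ : ℤ, ∑' n₂ : ℤ, ∑' n₃ : ℤ, ∑' n₄ : ℤ, F n₁ n₂ n₃ n₄)
      ≤ (50 / (1 - α) * B ^ (2:ℝ)) ^ 2 * B ^ (2 * (j : ℝ) * (2 - α))
  set R : ℝ := B ^ ((j:ℝ) + 1) with hRdef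
  have hR0 : 0 < R := Real.rpow_pos_of_pos hB0 _
  have hR1 : (1:ℝ) ≤ R := Real.one_le_rpow hB.le (by positivity)
  set M : ℕ := ⌈R⌉₊ with hMdef
  set s : Finset ℤ := Finset.Icc (-(M:ℤ)) M with hsdef
  have hMR : R ≤ (M:ℝ) := Nat.le_ceil _
  have hRM : (M:ℝ) ≤ 2 * R := by
    have := Nat.ceil_lt_add_one (show (0:ℝ) ≤ R from hR0.le)
    linarith
  have hvanish : ∀ n : ℤ, |(n:ℝ)| ≤ R → n ∈ s := by
    intro n hn
    have h1 : |(n:ℝ)| ≤ (M:ℝ) := hn.trans hMR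
    have h2 : -(M:ℝ) ≤ (n:ℝ) ∧ (n:ℝ) ≤ (M:ℝ) := abs_le.mp h1
    simp only [hsdef, Finset.mem_Icc]
    exact ⟨by exact_mod_cast h2.1, by exact_mod_cast h2.2⟩
  set g : ℤ → ℤ → ℝ := fun a b => (|(a:ℝ) - (b:ℝ)| + 1) ^ (-α) with hgdef
  have hgnn : ∀ a b : ℤ, 0 ≤ g a b := fun a b => Real.rpow_nonneg (by positivity) _
  set T : ℝ := ∑ a ∈ s, ∑ b ∈ s, g a b with hTdef
  have hTnn : 0 ≤ T := Finset.sum_nonneg fun a _ => Finset.sum_nonneg fun b _ => hgnn a b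
  -- replace tsums by finite sums
  have h4 : ∀ n₁ n₂ n₃ : ℤ, (∑' n₄ : ℤ, F n₁ n₂ n₃ n₄) = ∑ n₄ ∈ s, F n₁ n₂ n₃ n₄ := by
    intro n₁ n₂ n₃
    apply tsum_eq_sum
    intro b hb
    simp only [hF]
    exact if_neg (fun hc => hb (hvanish b hc.2.2.2.2.2.2.2))
  have h3 : ∀ n₁ n₂ : ℤ, (∑' n₃ : ℤ, ∑ n₄ ∈ s, F n₁ n₂ n₃ n₄)
      = ∑ n₃ ∈ s, ∑ n₄ ∈ s, F n₁ n₂ n₃ n₄ := by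
    intro n₁ n₂
    apply tsum_eq_sum
    intro b hb
    refine Finset.sum_eq_zero fun n₄ _ => ?_
    simp only [hF]
    exact if_neg (fun hc => hb (hvanish b hc.2.2.2.2.2.1))
  have h2 : ∀ n₁ : ℤ, (∑' n₂ : ℤ, ∑ n₃ ∈ s, ∑ n₄ ∈ s, F n₁ n₂ n₃ n₄)
      = ∑ n₂ ∈ s, ∑ n₃ ∈ s, ∑ n₄ ∈ s, F n₁ n₂ n₃ n₄ := by
    intro n₁
    apply tsum_eq_sum
    intro b hb
    refine Finset.sum_eq_zero fun n₃ _ => Finset.sum_eq_zero fun n₄ _ => ?_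
    simp only [hF]
    exact if_neg (fun hc => hb (hvanish b hc.2.2.2.1))
  have h1 : (∑' n₁ : ℤ, ∑ n₂ ∈ s, ∑ n₃ ∈ s, ∑ n₄ ∈ s, F n₁ n₂ n₃ n₄)
      = ∑ n₁ ∈ s, ∑ n₂ ∈ s, ∑ n₃ ∈ s, ∑ n₄ ∈ s, F n₁ n₂ n₃ n₄ := by
    apply tsum_eq_sum
    intro b hb
    refine Finset.sum_eq_zero fun n₂ _ => Finset.sum_eq_zero fun n₃ _ =>
      Finset.sum_eq_zero fun n₄ _ => ?_
    simp only [hF]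
    exact if_neg (fun hc => hb (hvanish b hc.2.1))
  have hsum_eq : (∑' n₁ : ℤ, ∑' n₂ : ℤ, ∑' n₃ : ℤ, ∑' n₄ : ℤ, F n₁ n₂ n₃ n₄)
      = ∑ n₁ ∈ s, ∑ n₂ ∈ s, ∑ n₃ ∈ s, ∑ n₄ ∈ s, F n₁ n₂ n₃ n₄ := by
    calc (∑' n₁ : ℤ, ∑' n₂ : ℤ, ∑' n₃ : ℤ, ∑' n₄ : ℤ, F n₁ n₂ n₃ n₄)
        = ∑' n₁ : ℤ, ∑' n₂ : ℤ, ∑' n₃ : ℤ, ∑ n₄ ∈ s, F n₁ n₂ n₃ n₄ :=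
          tsum_congr fun n₁ => tsum_congr fun n₂ => tsum_congr fun n₃ => h4 n₁ n₂ n₃
      _ = ∑' n₁ : ℤ, ∑' n₂ : ℤ, ∑ n₃ ∈ s, ∑ n₄ ∈ s, F n₁ n₂ n₃ n₄ :=
          tsum_congr fun n₁ => tsum_congr fun n₂ => h3 n₁ n₂
      _ = ∑' n₁ : ℤ, ∑ n₂ ∈ s, ∑ n₃ ∈ s, ∑ n₄ ∈ s, F n₁ n₂ n₃ n₄ :=
          tsum_congr fun n₁ => h2 n₁
      _ = ∑ n₁ ∈ s, ∑ n₂ ∈ s, ∑ n₃ ∈ s, ∑ n₄ ∈ s, F n₁ n₂ n₃ n₄ := h1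
  rw [hsum_eq]
  -- pointwise bound
  have hFle : ∀ n₁ n₂ n₃ n₄ : ℤ, F n₁ n₂ n₃ n₄ ≤ g n₃ n₄ * g n₁ n₂ := by
    intro n₁ n₂ n₃ n₄
    simp only [hF, hgdef]
    split_ifs with hc
    · have habs : (0:ℝ) ≤ |(n₁ : ℝ) - (n₂ : ℝ) + (n₃ : ℝ) - (n₄ : ℝ)| := abs_nonneg _
      have h1le : (|(n₁ : ℝ) - (n₂ : ℝ) + (n₃ : ℝ) - (n₄ : ℝ)| + 1) ^ (-α) ≤ 1 :=
        Real.rpow_le_one_of_one_le_of_nonpos (by linarith) (neg_nonpos.mpr hα0)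
      have hg2 : (0:ℝ) ≤ (|(n₃ : ℝ) - (n₄ : ℝ)| + 1) ^ (-α) := Real.rpow_nonneg (by positivity) _
      have hg3 : (0:ℝ) ≤ (|(n₁ : ℝ) - (n₂ : ℝ)| + 1) ^ (-α) := Real.rpow_nonneg (by positivity) _
      calc (|(n₁ : ℝ) - (n₂ : ℝ) + (n₃ : ℝ) - (n₄ : ℝ)| + 1) ^ (-α) *
              (|(n₃ : ℝ) - (n₄ : ℝ)| + 1) ^ (-α) * (|(n₁ : ℝ) - (n₂ : ℝ)| + 1) ^ (-α)
          ≤ 1 * (|(n₃ : ℝ) - (n₄ : ℝ)| + 1) ^ (-α) * (|(n₁ : ℝ) - (n₂ : ℝ)| + 1) ^ (-α) := by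
            apply mul_le_mul_of_nonneg_right _ hg3
            exact mul_le_mul_of_nonneg_right h1le hg2
        _ = (|(n₃ : ℝ) - (n₄ : ℝ)| + 1) ^ (-α) * (|(n₁ : ℝ) - (n₂ : ℝ)| + 1) ^ (-α) := by
            rw [one_mul]
    · positivity
  -- bound quadruple sum by T * T
  have hquad : (∑ n₁ ∈ s, ∑ n₂ ∈ s, ∑ n₃ ∈ s, ∑ n₄ ∈ s, F n₁ n₂ n₃ n₄) ≤ T * T := by
    have step1 : (∑ n₁ ∈ s, ∑ n₂ ∈ s, ∑ n₃ ∈ s, ∑ n₄ ∈ s, F n₁ n₂ n₃ n₄)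
        ≤ ∑ n₁ ∈ s, ∑ n₂ ∈ s, ∑ n₃ ∈ s, ∑ n₄ ∈ s, g n₃ n₄ * g n₁ n₂ := by
      refine Finset.sum_le_sum fun n₁ _ => Finset.sum_le_sum fun n₂ _ =>
        Finset.sum_le_sum fun n₃ _ => Finset.sum_le_sum fun n₄ _ => hFle n₁ n₂ n₃ n₄
    have step2 : (∑ n₁ ∈ s, ∑ n₂ ∈ s, ∑ n₃ ∈ s, ∑ n₄ ∈ s, g n₃ n₄ * g n₁ n₂) = T * T := by
      simp only [← Finset.sum_mul, ← Finset.mul_sum, hTdef]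
    linarith
  -- bound T
  have hinner : ∀ a ∈ s, (∑ b ∈ s, g a b) ≤ 2 * ((2 * (M:ℝ)) + 1) ^ (1 - α) / (1 - α) := by
    intro a ha
    have himg : (∑ b ∈ s, g a b) = ∑ k ∈ s.image (fun b => a - b), (|(k:ℝ)| + 1) ^ (-α) := by
      rw [Finset.sum_image (by intro x _ y _ h; have h' : a - x = a - y := h; omega)]
      refine Finset.sum_congr rfl fun b _ => ?_
      simp only [hgdef]
      norm_cast
    have hsub : s.image (fun b => a - b) ⊆ Finset.Icc (-((2 * M : ℕ) : ℤ)) ((2 * M : ℕ) : ℤ) := by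
      intro k hk
      simp only [Finset.mem_image] at hk
      obtain ⟨b, hb, rfl⟩ := hk
      simp only [hsdef, Finset.mem_Icc] at ha hb ⊢
      push_cast
      omega
    calc (∑ b ∈ s, g a b)
        = ∑ k ∈ s.image (fun b => a - b), (|(k:ℝ)| + 1) ^ (-α) := himg
      _ ≤ ∑ k ∈ Finset.Icc (-((2 * M : ℕ) : ℤ)) ((2 * M : ℕ) : ℤ), (|(k:ℝ)| + 1) ^ (-α) := by
          refine Finset.sum_le_sum_of_subset_of_nonneg hsub fun k _ _ =>
            Real.rpow_nonneg (by positivity) _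
      _ ≤ 2 * (((2 * M : ℕ) : ℝ) + 1) ^ (1 - α) / (1 - α) := aux_sym α hα0 hα₂ (2 * M)
      _ = 2 * ((2 * (M:ℝ)) + 1) ^ (1 - α) / (1 - α) := by push_cast; ring_nf
  have hcard : (s.card : ℝ) = 2 * (M:ℝ) + 1 := by
    rw [hsdef, Int.card_Icc]
    have : ((M:ℤ) + 1 - -(M:ℤ)).toNat = 2 * M + 1 := by omega
    rw [this]
    push_cast
    ring
  have hTbound : T ≤ (2 * (M:ℝ) + 1) * (2 * ((2 * (M:ℝ)) + 1) ^ (1 - α) / (1 - α)) := by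
    calc T ≤ ∑ _a ∈ s, 2 * ((2 * (M:ℝ)) + 1) ^ (1 - α) / (1 - α) :=
          Finset.sum_le_sum hinner
      _ = (s.card : ℝ) * (2 * ((2 * (M:ℝ)) + 1) ^ (1 - α) / (1 - α)) := by
          rw [Finset.sum_const, nsmul_eq_mul]
      _ = (2 * (M:ℝ) + 1) * (2 * ((2 * (M:ℝ)) + 1) ^ (1 - α) / (1 - α)) := by rw [hcard]
  -- numerics
  have hQ5R : 2 * (M:ℝ) + 1 ≤ 5 * R := by nlinarith
  have hQnn : (0:ℝ) ≤ 2 * (M:ℝ) + 1 := by positivity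
  have hrpowQ : (2 * (M:ℝ) + 1) ^ (1 - α) ≤ 5 * R ^ (1 - α) := by
    calc (2 * (M:ℝ) + 1) ^ (1 - α) ≤ (5 * R) ^ (1 - α) :=
          Real.rpow_le_rpow hQnn hQ5R h1α.le
      _ = 5 ^ (1 - α) * R ^ (1 - α) := Real.mul_rpow (by norm_num) hR0.le
      _ ≤ 5 * R ^ (1 - α) := by
          have h5 : (5:ℝ) ^ (1 - α) ≤ 5 ^ (1:ℝ) :=
            Real.rpow_le_rpow_of_exponent_le (by norm_num) (by linarith)
          have : (5:ℝ) ^ (1:ℝ) = 5 := Real.rpow_one 5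
          nlinarith [Real.rpow_nonneg hR0.le (1 - α)]
  have hRR : R * R ^ (1 - α) = B ^ (((j:ℝ) + 1) * (2 - α)) := by
    rw [hRdef, ← Real.rpow_mul hB0.le, ← Real.rpow_add hB0]
    congr 1
    ring
  have hfinal : T ≤ 50 / (1 - α) * B ^ (2:ℝ) * B ^ ((j:ℝ) * (2 - α)) := by
    have h2d : 2 * ((2 * (M:ℝ)) + 1) ^ (1 - α) / (1 - α) ≤ 2 * (5 * R ^ (1 - α)) / (1 - α) := by
      gcongr
    have hb1 : T ≤ (5 * R) * (2 * (5 * R ^ (1 - α)) / (1 - α)) := by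
      calc T ≤ (2 * (M:ℝ) + 1) * (2 * ((2 * (M:ℝ)) + 1) ^ (1 - α) / (1 - α)) := hTbound
        _ ≤ (5 * R) * (2 * (5 * R ^ (1 - α)) / (1 - α)) :=
            mul_le_mul hQ5R h2d (by positivity) (by positivity)
    have hb2 : (5 * R) * (2 * (5 * R ^ (1 - α)) / (1 - α)) = 50 / (1 - α) * (R * R ^ (1 - α)) := by
      field_simp
      ring
    have hexp : B ^ (((j:ℝ) + 1) * (2 - α)) = B ^ ((2:ℝ) - α) * B ^ ((j:ℝ) * (2 - α)) := by
      rw [← Real.rpow_add hB0]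
      congr 1
      ring
    have hBle : B ^ ((2:ℝ) - α) ≤ B ^ (2:ℝ) :=
      Real.rpow_le_rpow_of_exponent_le hB.le (by linarith)
    calc T ≤ 50 / (1 - α) * (R * R ^ (1 - α)) := by rw [← hb2]; exact hb1
      _ = 50 / (1 - α) * (B ^ ((2:ℝ) - α) * B ^ ((j:ℝ) * (2 - α))) := by rw [hRR, hexp]
      _ ≤ 50 / (1 - α) * (B ^ (2:ℝ) * B ^ ((j:ℝ) * (2 - α))) := by
          apply mul_le_mul_of_nonneg_left _ (by positivity)
          exact mul_le_mul_of_nonneg_right hBle (by positivity)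
      _ = 50 / (1 - α) * B ^ (2:ℝ) * B ^ ((j:ℝ) * (2 - α)) := by ring
  have hPP : B ^ ((j:ℝ) * (2 - α)) * B ^ ((j:ℝ) * (2 - α)) = B ^ (2 * (j:ℝ) * (2 - α)) := by
    rw [← Real.rpow_add hB0]
    congr 1
    ring
  calc (∑ n₁ ∈ s, ∑ n₂ ∈ s, ∑ n₃ ∈ s, ∑ n₄ ∈ s, F n₁ n₂ n₃ n₄)
      ≤ T * T := hquad
    _ ≤ (50 / (1 - α) * B ^ (2:ℝ) * B ^ ((j:ℝ) * (2 - α))) *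
        (50 / (1 - α) * B ^ (2:ℝ) * B ^ ((j:ℝ) * (2 - α))) :=
        mul_le_mul hfinal hfinal hTnn (by positivity)
    _ = (50 / (1 - α) * B ^ (2:ℝ)) ^ 2 * B ^ (2 * (j : ℝ) * (2 - α)) := by
        rw [← hPP]
        ring
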